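/- The distribution π is stationary for the transition matrix P: πP = π, i.e., for every state (l,k) ∈ Ω, ∑_{(i,j) ∈ Ω} π(i,j)·P((i,j),(l,k)) = π(l,k). -/
import Mathlib


open Finset

namespace RWStmt

variable {V : Type*} [Fintype V] [DecidableEq V]

/-- Out-neighbors: `N_out(v) = {u : (v,u) ∈ E}`. -/
def Nout (E : Finset (V × V)) (v : V) : Finset V :=
  Finset.univ.filter fun u => (v, u) ∈ E

/-- In-neighbors: `N_in(v) = {u : (u,v) ∈ E}`. -/
def Nin (E : Finset (V × V)) (v : V) : Finset V :=
  Finset.univ.filter fun u => (u, v) ∈ E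

/-- Neighbors: `N(v) = N_out(v) ∪ N_in(v)`. -/
def Nbr (E : Finset (V × V)) (v : V) : Finset V :=
  Nout E v ∪ Nin E v

/-- Total degree: `d_sum(v) = d_out(v) + d_in(v)`. -/
def dsum (E : Finset (V × V)) (v : V) : ℕ :=
  (Nout E v).card + (Nin E v).card

/-- Edge multiplicity: `m(i,j) = 𝟙[j ∈ N_out(i)] + 𝟙[j ∈ N_in(i)]`. -/
def edgeMul (E : Finset (V × V)) (i j : V) : ℝ :=
  (if j ∈ Nout E i then 1 else 0) + (if j ∈ Nin E i then 1 else 0)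

/-- State space `Ω = {(i,j) : (i,j) ∈ E or (j,i) ∈ E or i = j}`. -/
def states (E : Finset (V × V)) : Finset (V × V) :=
  Finset.univ.filter fun p => p ∈ E ∨ (p.2, p.1) ∈ E ∨ p.1 = p.2

/-- The graph is weakly connected: any two vertices are joined by a path in the
symmetric closure of the edge relation. -/
def WeaklyConnected (E : Finset (V × V)) : Prop :=
  ∀ i j : V, Relation.ReflTransGen (fun a b => (a, b) ∈ E ∨ (b, a) ∈ E) i j

/-- Transition matrix of the proposed sampling algorithm:
`P((i,j),(l,k)) = α·m(i,k)/d_sum(i)` if `l = i`;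
`(1-α)·m(i,k)/d_sum(i)` if `l = k` and `l ∈ N(i)`; else `0`. -/
noncomputable def trans (E : Finset (V × V)) (α : ℝ) (e e' : V × V) : ℝ :=
  if e'.1 = e.1 then α * edgeMul E e.1 e'.2 / (dsum E e.1 : ℝ)
  else if e'.1 = e'.2 ∧ e'.1 ∈ Nbr E e.1 then
    (1 - α) * edgeMul E e.1 e'.2 / (dsum E e.1 : ℝ)
  else 0

/-- The stationary distribution:
`π(i,j) = α·m(i,j)/(2|E|)` for `i ≠ j`, and `π(i,i) = (1-α)·d_sum(i)/(2|E|)`. -/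
noncomputable def statDist (E : Finset (V × V)) (α : ℝ) (e : V × V) : ℝ :=
  if e.1 = e.2 then (1 - α) * (dsum E e.1 : ℝ) / (2 * (E.card : ℝ))
  else α * edgeMul E e.1 e.2 / (2 * (E.card : ℝ))

lemma div_mul_div_cancel'' (a b c : ℝ) (ha : a ≠ 0) : a / c * (b / a) = b / c := by
  rw [div_mul_div_comm, mul_comm c a, mul_div_mul_left _ _ ha]

lemma edgeMul_eq (E : Finset (V × V)) (i j : V) :
    edgeMul E i j = (if (i, j) ∈ E then (1:ℝ) else 0) + (if (j, i) ∈ E then 1 else 0) := by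
  simp [edgeMul, Nout, Nin]

lemma edgeMul_self (E : Finset (V × V)) (hE : ∀ v : V, (v, v) ∉ E) (i : V) :
    edgeMul E i i = 0 := by
  simp [edgeMul_eq, hE i]

lemma edgeMul_of_not_nbr (E : Finset (V × V)) {i j : V} (h : j ∉ Nbr E i) :
    edgeMul E i j = 0 := by
  rw [Nbr, Finset.mem_union] at h
  push_neg at h
  simp [edgeMul, h.1, h.2]

lemma sum_edgeMul_right (E : Finset (V × V)) (i : V) :
    ∑ j, edgeMul E i j = (dsum E i : ℝ) := by
  simp only [edgeMul, Finset.sum_add_distrib, Finset.sum_boole, Finset.filter_univ_mem, dsum]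
  push_cast; ring

lemma sum_edgeMul_left (E : Finset (V × V)) (l : V) :
    ∑ i, edgeMul E i l = (dsum E l : ℝ) := by
  simp only [edgeMul_eq, Finset.sum_add_distrib, Finset.sum_boole, dsum, Nout, Nin]
  push_cast; ring

lemma rowsum (E : Finset (V × V)) (hE : ∀ v : V, (v, v) ∉ E) (α : ℝ) (i : V) :
    ∑ j, (if (i, j) ∈ E ∨ (j, i) ∈ E ∨ i = j then statDist E α (i, j) else 0)
      = (dsum E i : ℝ) / (2 * (E.card : ℝ)) := by
  have hfun : ∀ j, (if (i, j) ∈ E ∨ (j, i) ∈ E ∨ i = j then statDist E α (i, j) else 0)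
      = if i = j then (1 - α) * (dsum E i : ℝ) / (2 * (E.card : ℝ))
        else α * edgeMul E i j / (2 * (E.card : ℝ)) := by
    intro j
    by_cases hij : i = j
    · subst hij; simp [statDist]
    · by_cases hedge : (i, j) ∈ E ∨ (j, i) ∈ E
      · simp only [if_pos (Or.imp_right Or.inl hedge), if_neg hij, statDist]
      · push_neg at hedge
        rw [if_neg (by tauto), if_neg hij, edgeMul_eq, if_neg hedge.1, if_neg hedge.2]
        ring
  simp only [hfun]
  rw [← Finset.add_sum_erase _ _ (Finset.mem_univ i), if_pos rfl]
  have h2 : ∑ j ∈ Finset.univ.erase i,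
      (if i = j then (1 - α) * (dsum E i : ℝ) / (2 * (E.card : ℝ))
        else α * edgeMul E i j / (2 * (E.card : ℝ)))
      = ∑ j ∈ Finset.univ.erase i, α * edgeMul E i j / (2 * (E.card : ℝ)) := by
    apply Finset.sum_congr rfl
    intro j hj
    rw [if_neg (by simpa [eq_comm] using (Finset.mem_erase.mp hj).1)]
  rw [h2]
  have h3 : ∑ j ∈ Finset.univ.erase i, α * edgeMul E i j / (2 * (E.card : ℝ))
      = α * (dsum E i : ℝ) / (2 * (E.card : ℝ)) := by
    rw [← Finset.sum_div, ← Finset.mul_sum,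
      Finset.sum_erase _ (by rw [edgeMul_self E hE]), sum_edgeMul_right]
  rw [h3]; ring

/-- `π` is stationary for `P`: `πP = π`. -/
theorem stmt_6 (E : Finset (V × V)) (hE : ∀ v : V, (v, v) ∉ E)
    (hconn : WeaklyConnected E) (hcard : 2 ≤ Fintype.card V)
    (α : ℝ) (hα0 : 0 ≤ α) (hα1 : α < 1) :
    ∀ e' ∈ states E, ∑ e ∈ states E, statDist E α e * trans E α e e'
      = statDist E α e' := by
  -- every vertex has positive degree
  have hdeg : ∀ v : V, 1 ≤ dsum E v := by
    intro v
    obtain ⟨w, hw⟩ := Fintype.exists_ne_of_one_lt_card (by omega) v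
    rcases (hconn v w).cases_head with h | ⟨c, hc, _⟩
    · exact absurd h.symm hw
    · rcases hc with h | h
      · have hc' : c ∈ Nout E v := by simp [Nout, h]
        have := Finset.card_pos.mpr ⟨c, hc'⟩
        simp only [dsum]; omega
      · have hc' : c ∈ Nin E v := by simp [Nin, h]
        have := Finset.card_pos.mpr ⟨c, hc'⟩
        simp only [dsum]; omega
  have hdegR : ∀ v : V, (dsum E v : ℝ) ≠ 0 := by
    intro v
    have := hdeg v
    positivity
  have hV : Nonempty V := Fintype.card_pos_iff.mp (by omega)
  obtain ⟨v0⟩ := hV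
  have hEcard : 0 < E.card := by
    have h1 := hdeg v0
    simp only [dsum] at h1
    apply Finset.card_pos.mpr
    rcases le_or_gt 1 (Nout E v0).card with h | h
    · obtain ⟨u, hu⟩ := Finset.card_pos.mp (show 0 < (Nout E v0).card by omega)
      exact ⟨(v0, u), by simpa [Nout] using hu⟩
    · obtain ⟨u, hu⟩ := Finset.card_pos.mp (show 0 < (Nin E v0).card by omega)
      exact ⟨(u, v0), by simpa [Nin] using hu⟩
  have hEpos : (0:ℝ) < 2 * (E.card : ℝ) := by
    have : (0:ℝ) < E.card := by exact_mod_cast hEcard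
    linarith
  rintro ⟨l, k⟩ he'
  simp only [states, Finset.mem_filter, Finset.mem_univ, true_and] at he'
  -- rewrite the sum over states as a double sum
  rw [states, Finset.sum_filter, ← Finset.univ_product_univ, Finset.sum_product]
  have hkey : ∀ i : V, ∑ j, (if (i, j) ∈ E ∨ (j, i) ∈ E ∨ i = j
        then statDist E α (i, j) * trans E α (i, j) (l, k) else 0)
      = (dsum E i : ℝ) / (2 * (E.card : ℝ)) * trans E α (i, k) (l, k) := by
    intro i
    have hsame : ∀ j, trans E α (i, j) (l, k) = trans E α (i, k) (l, k) := fun j => rfl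
    calc ∑ j, (if (i, j) ∈ E ∨ (j, i) ∈ E ∨ i = j
          then statDist E α (i, j) * trans E α (i, j) (l, k) else 0)
        = (∑ j, (if (i, j) ∈ E ∨ (j, i) ∈ E ∨ i = j then statDist E α (i, j) else 0))
            * trans E α (i, k) (l, k) := by
          rw [Finset.sum_mul]
          apply Finset.sum_congr rfl
          intro j _
          rw [ite_mul, zero_mul, hsame j]
      _ = _ := by rw [rowsum E hE α i]
  simp only [hkey]
  by_cases hlk : l = k
  · subst hlk
    have hterm : ∀ i : V, (dsum E i : ℝ) / (2 * (E.card : ℝ)) * trans E α (i, l) (l, l)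
        = (1 - α) * edgeMul E i l / (2 * (E.card : ℝ)) := by
      intro i
      by_cases hil : l = i
      · subst hil
        rw [trans, if_pos rfl]
        simp [edgeMul_self E hE]
      · by_cases hnbr : l ∈ Nbr E i
        · rw [trans, if_neg hil, if_pos (show (l, l).1 = (l, l).2 ∧ (l, l).1 ∈ Nbr E (i, l).1 from ⟨rfl, hnbr⟩)]
          exact div_mul_div_cancel'' _ _ _ (hdegR i)
        · rw [trans, if_neg hil, if_neg (by tauto), edgeMul_of_not_nbr E hnbr]
          ring
    simp only [hterm]
    rw [← Finset.sum_div, ← Finset.mul_sum, sum_edgeMul_left]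
    simp [statDist]
  · have hterm : ∀ i : V, (dsum E i : ℝ) / (2 * (E.card : ℝ)) * trans E α (i, k) (l, k)
        = if l = i then α * edgeMul E i k / (2 * (E.card : ℝ)) else 0 := by
      intro i
      by_cases hil : l = i
      · rw [trans, if_pos hil, if_pos hil]
        subst hil
        exact div_mul_div_cancel'' _ _ _ (hdegR l)
      · rw [trans, if_neg hil, if_neg (by tauto), if_neg hil, mul_zero]
    simp only [hterm]
    rw [Finset.sum_ite_eq]
    simp [statDist, hlk]

end RWStmt
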